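/- Let K₀ be a compact subset of the open unit disk B(0,1) with empty interior, and let G = B(0,1) ∖ K₀. Then there exist a sequence of points z_k ∈ G and radii r_k > 0 such that: the closed disks B̄(z_k, r_k) are pairwise disjoint and contained in G; ∑_{k=1}^{∞} r_k < ∞; every point of K₀ is the limit of some subsequence of (z_k); and no point of G is the limit of any subsequence of (z_k). -/

import Mathlib

open Metric Filter

noncomputable section

namespace Stmt17Aux

variable (G : Set ℂ) (t : ℕ → ℂ)

def Cond (k : ℕ) (prev : ∀ j, j < k → ℂ × ℝ) (p : ℂ × ℝ) : Prop :=
  dist p.1 (t k) < (2:ℝ)⁻¹ ^ k ∧ 0 < p.2 ∧ p.2 ≤ (2:ℝ)⁻¹ ^ k ∧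
    closedBall p.1 p.2 ⊆ G ∧
    ∀ j (h : j < k), Disjoint (closedBall (prev j h).1 (prev j h).2) (closedBall p.1 p.2)

open scoped Classical in
noncomputable def f (k : ℕ) : ℂ × ℝ :=
  if h : ∃ p, Cond G t k (fun j _ => f j) p then h.choose else default
termination_by k
decreasing_by all_goals assumption

theorem exists_cond (htc : ∀ k, t k ∈ closure G) (htn : ∀ k, t k ∉ G) (hG : IsOpen G)
    (k : ℕ) (prev : ∀ j, j < k → ℂ × ℝ)
    (hprev : ∀ j (h : j < k), closedBall (prev j h).1 (prev j h).2 ⊆ G) :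
    ∃ p, Cond G t k prev p := by
  set C : Set ℂ := ⋃ j : Fin k, closedBall (prev j j.2).1 (prev j j.2).2 with hC
  have hCclosed : IsClosed C := isClosed_iUnion_of_finite fun j => Metric.isClosed_closedBall
  have hCsub : C ⊆ G := Set.iUnion_subset fun j => hprev j j.2
  have htkC : t k ∉ C := fun h => htn k (hCsub h)
  have hmem : Cᶜ ∈ nhds (t k) := hCclosed.isOpen_compl.mem_nhds htkC
  obtain ⟨δ, hδ, hball⟩ := Metric.mem_nhds_iff.mp hmem
  have hε : 0 < min δ ((2:ℝ)⁻¹ ^ k) := lt_min hδ (by positivity)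
  obtain ⟨x, hxG, hxd⟩ := Metric.mem_closure_iff.mp (htc k) _ hε
  have hxC : x ∈ Cᶜ := hball (by
    rw [mem_ball, dist_comm]
    exact lt_of_lt_of_le hxd (min_le_left _ _))
  have hopen : IsOpen (G ∩ Cᶜ) := hG.inter hCclosed.isOpen_compl
  obtain ⟨s, hs, hsub2⟩ := Metric.isOpen_iff.mp hopen x ⟨hxG, hxC⟩
  have hrs : min (s/2) ((2:ℝ)⁻¹ ^ k) < s := lt_of_le_of_lt (min_le_left _ _) (by linarith)
  have hbsub : closedBall x (min (s/2) ((2:ℝ)⁻¹ ^ k)) ⊆ G ∩ Cᶜ :=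
    (closedBall_subset_ball hrs).trans hsub2
  refine ⟨(x, min (s/2) ((2:ℝ)⁻¹ ^ k)), ?_, ?_, min_le_right _ _, ?_, ?_⟩
  · simpa [dist_comm] using lt_of_lt_of_le hxd (min_le_right _ _)
  · have : (0:ℝ) < (2:ℝ)⁻¹ ^ k := by positivity
    exact lt_min (by linarith) this
  · exact hbsub.trans Set.inter_subset_left
  · intro j hj
    rw [Set.disjoint_left]
    intro y hyj hyk
    have hyC : y ∈ C := Set.mem_iUnion.mpr ⟨⟨j, hj⟩, hyj⟩
    exact (hbsub hyk).2 hyC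

theorem f_spec (htc : ∀ k, t k ∈ closure G) (htn : ∀ k, t k ∉ G) (hG : IsOpen G) :
    ∀ k, Cond G t k (fun j _ => f G t j) (f G t k) := by
  intro k
  induction k using Nat.strong_induction_on with
  | _ k ih =>
    have h : ∃ p, Cond G t k (fun j _ => f G t j) p :=
      exists_cond G t htc htn hG k _ (fun j hj => (ih j hj).2.2.2.1)
    rw [f, dif_pos h]
    exact h.choose_spec

end Stmt17Aux


open Stmt17Aux in
theorem stmt17 (K₀ : Set ℂ) (hK : IsCompact K₀) (hsub : K₀ ⊆ ball 0 1)
    (hint : interior K₀ = ∅) :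
    ∃ (z : ℕ → ℂ) (r : ℕ → ℝ),
      (∀ k, 0 < r k) ∧
      (∀ j k, j ≠ k → Disjoint (closedBall (z j) (r j)) (closedBall (z k) (r k))) ∧
      (∀ k, closedBall (z k) (r k) ⊆ ball 0 1 \ K₀) ∧
      Summable r ∧
      (∀ w ∈ K₀, ∃ φ : ℕ → ℕ, StrictMono φ ∧ Tendsto (z ∘ φ) atTop (nhds w)) ∧
      (∀ w ∈ ball 0 1 \ K₀,
        ¬ ∃ φ : ℕ → ℕ, StrictMono φ ∧ Tendsto (z ∘ φ) atTop (nhds w)) := by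
  classical
  set G : Set ℂ := ball 0 1 \ K₀ with hGdef
  have hGopen : IsOpen G := isOpen_ball.sdiff hK.isClosed
  set T : Set ℂ := insert 1 K₀ with hTdef
  have hTclosed : IsClosed T := by
    rw [hTdef, Set.insert_eq]; exact isClosed_singleton.union hK.isClosed
  have h1T : (1:ℂ) ∈ T := Set.mem_insert _ _
  have h1nb : (1:ℂ) ∉ ball (0:ℂ) 1 := by simp
  have hballcl : ball (0:ℂ) 1 ⊆ closure G := by
    intro x hx
    rw [Metric.mem_closure_iff]
    intro ε hε
    have hopen : IsOpen (ball x ε ∩ ball (0:ℂ) 1) := isOpen_ball.inter isOpen_ball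
    have hne : (ball x ε ∩ ball (0:ℂ) 1).Nonempty := ⟨x, mem_ball_self hε, hx⟩
    have hns : ¬ (ball x ε ∩ ball (0:ℂ) 1 ⊆ K₀) := by
      intro hsub'
      have h2 := interior_maximal hsub' hopen
      rw [hint] at h2
      obtain ⟨p, hp⟩ := hne
      exact Set.notMem_empty p (h2 hp)
    obtain ⟨y, hy, hyK⟩ := Set.not_subset.mp hns
    exact ⟨y, ⟨hy.2, hyK⟩, by rw [dist_comm]; exact mem_ball.mp hy.1⟩
  have hTcl : T ⊆ closure G := by
    intro x hx
    rcases hx with hx | hx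
    · rw [hx]
      have h1 : (1:ℂ) ∈ closedBall (0:ℂ) 1 := by
        simp [mem_closedBall]
      rw [← closure_ball (0:ℂ) one_ne_zero] at h1
      exact closure_minimal hballcl isClosed_closure h1
    · exact hballcl (hsub hx)
  have hTnG : ∀ x ∈ T, x ∉ G := by
    intro x hx hxG
    rcases hx with hx | hx
    · rw [hx] at hxG; exact h1nb hxG.1
    · exact hxG.2 hx
  haveI : Nonempty ↥T := ⟨⟨1, h1T⟩⟩
  set d : ℕ → ℂ := fun n => ((TopologicalSpace.denseSeq ↥T n : ↥T) : ℂ) with hddef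
  have hdT : ∀ n, d n ∈ T := fun n => (TopologicalSpace.denseSeq ↥T n).2
  have hdd : ∀ w ∈ T, ∀ δ > 0, ∃ m, dist w (d m) < δ := by
    intro w hw δ hδ
    have hdr := TopologicalSpace.denseRange_denseSeq ↥T
    rw [Metric.denseRange_iff] at hdr
    obtain ⟨m, hm⟩ := hdr ⟨w, hw⟩ δ hδ
    rw [Subtype.dist_eq] at hm
    exact ⟨m, hm⟩
  set t : ℕ → ℂ := fun k => d (Nat.unpair k).1 with htdef
  have htT : ∀ k, t k ∈ T := fun k => hdT _
  have htc : ∀ k, t k ∈ closure G := fun k => hTcl (htT k)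
  have htn : ∀ k, t k ∉ G := fun k => hTnG _ (htT k)
  have S := Stmt17Aux.f_spec G t htc htn hGopen
  refine ⟨fun k => (f G t k).1, fun k => (f G t k).2, fun k => (S k).2.1, ?_, ?_, ?_, ?_, ?_⟩
  · -- disjointness
    intro j k hjk
    rcases lt_or_gt_of_ne hjk with h | h
    · exact (S k).2.2.2.2 j h
    · exact ((S j).2.2.2.2 k h).symm
  · -- subset
    intro k
    exact (S k).2.2.2.1
  · -- summable
    refine Summable.of_nonneg_of_le (fun k => (S k).2.1.le) (fun k => (S k).2.2.1) ?_
    exact summable_geometric_of_lt_one (by norm_num) (by norm_num)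
  · -- cluster at each point of K₀
    intro w hw
    have hfreq : ∀ n : ℕ, ∃ᶠ k in atTop, dist ((f G t k).1) w < ((n:ℝ)+1)⁻¹ := by
      intro n
      have hδ : (0:ℝ) < ((n:ℝ)+1)⁻¹ := by positivity
      obtain ⟨m, hm⟩ := hdd w (Set.mem_insert_iff.mpr (Or.inr hw)) (((n:ℝ)+1)⁻¹/2) (by positivity)
      rw [frequently_atTop]
      intro N
      obtain ⟨j₀, hj₀⟩ := exists_pow_lt_of_lt_one (show (0:ℝ) < ((n:ℝ)+1)⁻¹/2 by positivity)
        (show (2:ℝ)⁻¹ < 1 by norm_num)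
      refine ⟨Nat.pair m (max N j₀), le_trans (le_max_left _ _) (Nat.right_le_pair _ _), ?_⟩
      have htk : t (Nat.pair m (max N j₀)) = d m := by
        rw [htdef]; simp [Nat.unpair_pair]
      have h1 : dist ((f G t (Nat.pair m (max N j₀))).1) (d m) < ((n:ℝ)+1)⁻¹/2 := by
        have h2 := (S (Nat.pair m (max N j₀))).1
        rw [htk] at h2
        refine lt_of_lt_of_le (lt_of_lt_of_le h2 ?_) hj₀.le
        exact pow_le_pow_of_le_one (by norm_num) (by norm_num)
          (le_trans (le_max_right _ _) (Nat.right_le_pair _ _))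
      calc dist ((f G t (Nat.pair m (max N j₀))).1) w
          ≤ dist ((f G t (Nat.pair m (max N j₀))).1) (d m) + dist (d m) w := dist_triangle _ _ _
        _ < ((n:ℝ)+1)⁻¹/2 + ((n:ℝ)+1)⁻¹/2 := by
            rw [dist_comm (d m) w]; exact add_lt_add h1 hm
        _ = ((n:ℝ)+1)⁻¹ := by ring
    obtain ⟨φ, hφ, hP⟩ := Filter.extraction_forall_of_frequently hfreq
    refine ⟨φ, hφ, ?_⟩
    rw [tendsto_iff_dist_tendsto_zero]
    refine squeeze_zero (fun n => dist_nonneg) (fun n => (hP n).le) ?_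
    have := tendsto_one_div_add_atTop_nhds_zero_nat (𝕜 := ℝ)
    simpa [one_div] using this
  · -- no cluster point in G
    rintro w hw ⟨φ, hφ, hlim⟩
    have hdist : ∀ n, dist (t (φ n)) w ≤ (2:ℝ)⁻¹ ^ n + dist ((f G t (φ n)).1) w := by
      intro n
      have h1 : dist (t (φ n)) ((f G t (φ n)).1) < (2:ℝ)⁻¹ ^ (φ n) := by
        rw [dist_comm]; exact (S (φ n)).1
      have h2 : (2:ℝ)⁻¹ ^ (φ n) ≤ (2:ℝ)⁻¹ ^ n :=
        pow_le_pow_of_le_one (by norm_num) (by norm_num) (hφ.le_apply)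
      calc dist (t (φ n)) w ≤ dist (t (φ n)) ((f G t (φ n)).1) + dist ((f G t (φ n)).1) w :=
            dist_triangle _ _ _
        _ ≤ (2:ℝ)⁻¹ ^ n + dist ((f G t (φ n)).1) w := by linarith
    have htend : Tendsto (fun n => dist (t (φ n)) w) atTop (nhds 0) := by
      refine squeeze_zero (fun n => dist_nonneg) hdist ?_
      have h3 : Tendsto (fun n : ℕ => (2:ℝ)⁻¹ ^ n) atTop (nhds 0) :=
        tendsto_pow_atTop_nhds_zero_of_lt_one (by norm_num) (by norm_num)
      have h4 : Tendsto (fun n => dist ((f G t (φ n)).1) w) atTop (nhds 0) :=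
        tendsto_iff_dist_tendsto_zero.mp hlim
      simpa using h3.add h4
    have hwT : w ∈ T :=
      hTclosed.closure_subset (mem_closure_of_tendsto
        (tendsto_iff_dist_tendsto_zero.mpr htend) (Eventually.of_forall (fun n => htT (φ n))))
    rcases hwT with h | h
    · rw [h] at hw; exact h1nb hw.1
    · exact hw.2 h
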